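/- Szegő's theorem (answering Pólya's question): for every n ≥ 3 there is no n×n sign matrix ε, with all entries ε_{ij} ∈ {−1, +1}, such that PER_n equals the determinant of the matrix with (i,j)-entry ε_{ij}·x_{ij}, as multivariate polynomials over ℂ. -/

import Mathlib

open MvPolynomial

/-- The permanent polynomial `PER_n = ∑_{σ ∈ S_n} ∏_i x_{i,σ(i)}` in the `n²`
variables `x_{ij}`, over ℂ. -/
noncomputable def permPoly (n : ℕ) : MvPolynomial (Fin n × Fin n) ℂ :=
  ∑ σ : Equiv.Perm (Fin n), ∏ i, X (i, σ i)

/-- The exponent of the monomial `∏_i x_{i,σ(i)}`. -/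
noncomputable def dmap {n : ℕ} (σ : Equiv.Perm (Fin n)) : (Fin n × Fin n) →₀ ℕ :=
  ∑ i, Finsupp.single (i, σ i) 1

lemma dmap_apply {n : ℕ} (σ : Equiv.Perm (Fin n)) (a b : Fin n) :
    dmap σ (a, b) = if b = σ a then 1 else 0 := by
  classical
  rw [dmap, Finsupp.finset_sum_apply, Finset.sum_eq_single a]
  · simp [Finsupp.single_apply, Prod.ext_iff, eq_comm]
  · intro i _ hia
    simp [Finsupp.single_apply, Prod.ext_iff, hia]
  · simp

lemma dmap_inj {n : ℕ} {σ τ : Equiv.Perm (Fin n)} (h : dmap σ = dmap τ) : σ = τ := by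
  apply Equiv.ext
  intro a
  have h1 := congrArg (fun f : (Fin n × Fin n) →₀ ℕ => f (a, σ a)) h
  simp only [dmap_apply, eq_self_iff_true, if_true] at h1
  rcases eq_or_ne (σ a) (τ a) with h' | h'
  · exact h'
  · rw [if_neg h'] at h1
    exact absurd h1 one_ne_zero



lemma prod_X_eq {n : ℕ} (s : Finset (Fin n)) (f : Fin n → Fin n × Fin n) :
    (∏ i ∈ s, (X (f i) : MvPolynomial (Fin n × Fin n) ℂ)) =
      monomial (∑ i ∈ s, Finsupp.single (f i) 1) 1 := by
  classical
  induction s using Finset.induction with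
  | empty => simp
  | insert _ _ h ih =>
      rw [Finset.prod_insert h, Finset.sum_insert h, ih, X, monomial_mul, one_mul]

lemma prod_X_eq_dmap {n : ℕ} (σ : Equiv.Perm (Fin n)) :
    (∏ i, (X (i, σ i) : MvPolynomial (Fin n × Fin n) ℂ)) = monomial (dmap σ) 1 := by
  rw [prod_X_eq]; rfl

lemma sum_single_eq_dmap {n : ℕ} (σ : Equiv.Perm (Fin n)) :
    (∑ i, Finsupp.single ((σ i : Fin n), i) (1 : ℕ)) = dmap σ⁻¹ := by
  rw [dmap, ← Equiv.sum_comp σ (fun j => Finsupp.single (j, σ⁻¹ j) (1 : ℕ))]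
  simp

/-- **Szegő's theorem** (answering Pólya's question): for every `n ≥ 3` there is no `n × n`
sign matrix `ε` (all entries `±1`) such that `PER_n` equals the determinant of the matrix
with `(i,j)`-entry `ε_{ij} · x_{ij}`, as polynomials over ℂ. -/
theorem szego (n : ℕ) (hn : 3 ≤ n) :
    ¬ ∃ ε : Matrix (Fin n) (Fin n) ℂ,
      (∀ i j, ε i j = 1 ∨ ε i j = -1) ∧
      permPoly n = Matrix.det (Matrix.of fun i j => C (ε i j) * X (i, j)) := by
  classical
  rintro ⟨ε, hε, heq⟩
  have key : ∀ τ : Equiv.Perm (Fin n),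
      (1 : ℂ) = ((Equiv.Perm.sign τ : ℤ) : ℂ) * ∏ i, ε i (τ i) := by
    intro τ
    have h1 : coeff (dmap τ) (permPoly n) = 1 := by
      rw [permPoly, coeff_sum, Finset.sum_eq_single τ]
      · rw [prod_X_eq_dmap, coeff_monomial, if_pos rfl]
      · intro σ _ hστ
        rw [prod_X_eq_dmap, coeff_monomial, if_neg (fun h => hστ (dmap_inj h))]
      · simp
    have hterm : ∀ σ : Equiv.Perm (Fin n),
        (((Equiv.Perm.sign σ : ℤ) : MvPolynomial (Fin n × Fin n) ℂ) *
          ∏ i, (Matrix.of fun i j => C (ε i j) * X (i, j)) (σ i) i)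
        = monomial (dmap σ⁻¹)
            (((Equiv.Perm.sign σ : ℤ) : ℂ) * ∏ i, ε (σ i) i) := by
      intro σ
      have hprod : (∏ i, (Matrix.of fun i j => C (ε i j) * X (i, j)) (σ i) i)
          = C (∏ i, ε (σ i) i) * monomial (dmap σ⁻¹) 1 := by
        simp only [Matrix.of_apply]
        rw [Finset.prod_mul_distrib, ← map_prod, prod_X_eq, sum_single_eq_dmap]
      have hC : ((Equiv.Perm.sign σ : ℤ) : MvPolynomial (Fin n × Fin n) ℂ)
          = C ((Equiv.Perm.sign σ : ℤ) : ℂ) :=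
        (map_intCast (C : ℂ →+* MvPolynomial (Fin n × Fin n) ℂ) _).symm
      rw [hprod, hC, ← mul_assoc, ← map_mul, C_mul_monomial, mul_one]
    have h2 : coeff (dmap τ)
        (Matrix.det (Matrix.of fun i j => C (ε i j) * X (i, j)))
        = ((Equiv.Perm.sign τ : ℤ) : ℂ) * ∏ i, ε i (τ i) := by
      rw [Matrix.det_apply', coeff_sum]
      simp only [hterm, coeff_monomial]
      rw [Finset.sum_eq_single τ⁻¹]
      · rw [if_pos (by rw [inv_inv])]
        congr 1
        · rw [Equiv.Perm.sign_inv]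
        · rw [← Equiv.prod_comp τ (fun j => ε (τ⁻¹ j) j)]
          simp
      · intro σ _ hστ
        rw [if_neg]
        intro h
        exact hστ (by rw [← inv_inv σ, dmap_inj h])
      · simp
    rw [heq, h2] at h1
    exact h1.symm
  -- Now derive a contradiction using the elements 0, 1, 2 of Fin n.
  have h0n : (0 : ℕ) < n := by omega
  have h1n : (1 : ℕ) < n := by omega
  have h2n : (2 : ℕ) < n := by omega
  set x0 : Fin n := ⟨0, h0n⟩ with hx0
  set x1 : Fin n := ⟨1, h1n⟩ with hx1
  set x2 : Fin n := ⟨2, h2n⟩ with hx2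
  have h01 : x0 ≠ x1 := by simp [hx0, hx1, Fin.ext_iff]
  have h02 : x0 ≠ x2 := by simp [hx0, hx2, Fin.ext_iff]
  have h12 : x1 ≠ x2 := by simp [hx1, hx2, Fin.ext_iff]
  have h10 : x1 ≠ x0 := h01.symm
  have h20 : x2 ≠ x0 := h02.symm
  have h21 : x2 ≠ x1 := h12.symm
  set τ1 := Equiv.swap x0 x1 with hτ1
  set τ2 := Equiv.swap x1 x2 with hτ2
  set τ3 := Equiv.swap x0 x2 with hτ3
  set c := τ1 * τ2 with hc
  have hs1 : Equiv.Perm.sign τ1 = -1 := Equiv.Perm.sign_swap h01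
  have hs2 : Equiv.Perm.sign τ2 = -1 := Equiv.Perm.sign_swap h12
  have hs3 : Equiv.Perm.sign τ3 = -1 := Equiv.Perm.sign_swap h02
  have hsc : Equiv.Perm.sign c = 1 := by
    rw [hc, Equiv.Perm.sign_mul, hs1, hs2]; rfl
  have hsc' : Equiv.Perm.sign c⁻¹ = 1 := by rw [Equiv.Perm.sign_inv, hsc]
  have hcinv : c⁻¹ = τ2 * τ1 := by
    rw [hc, mul_inv_rev, hτ1, hτ2, Equiv.swap_inv, Equiv.swap_inv]
  -- the six key equations
  have k1 := key τ1
  have k2 := key τ2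
  have k3 := key τ3
  have kc := key c
  have kc' := key c⁻¹
  have kid := key 1
  rw [hs1] at k1; rw [hs2] at k2; rw [hs3] at k3
  rw [hsc] at kc; rw [hsc'] at kc'
  rw [Equiv.Perm.sign_one] at kid
  simp only [Units.val_neg, Units.val_one, Int.cast_neg, Int.cast_one,
    neg_one_mul, one_mul, Equiv.Perm.one_apply] at k1 k2 k3 kc kc' kid
  have hP1 : (∏ i, ε i (τ1 i)) = -1 := by linear_combination k1
  have hP2 : (∏ i, ε i (τ2 i)) = -1 := by linear_combination k2
  have hP3 : (∏ i, ε i (τ3 i)) = -1 := by linear_combination k3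
  have hPc : (∏ i, ε i (c i)) = 1 := kc.symm
  have hPc' : (∏ i, ε i (c⁻¹ i)) = 1 := kc'.symm
  have hPid : (∏ i, ε i i) = 1 := kid.symm
  have hmain : (∏ i, ε i (τ1 i)) * (∏ i, ε i (τ2 i)) * (∏ i, ε i (τ3 i))
      = (∏ i, ε i (c i)) * (∏ i, ε i (c⁻¹ i)) * (∏ i, ε i i) := by
    rw [← Finset.prod_mul_distrib, ← Finset.prod_mul_distrib,
      ← Finset.prod_mul_distrib, ← Finset.prod_mul_distrib]
    apply Finset.prod_congr rfl
    intro i _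
    have e20 : Equiv.swap x0 x1 x2 = x2 := Equiv.swap_apply_of_ne_of_ne h20 h21
    have e01 : Equiv.swap x1 x2 x0 = x0 := Equiv.swap_apply_of_ne_of_ne h01 h02
    have e12 : Equiv.swap x0 x2 x1 = x1 := Equiv.swap_apply_of_ne_of_ne h10 h12
    rcases eq_or_ne i x0 with h | hi0
    · subst h
      simp only [hcinv, hc, mul_inv_rev, Equiv.swap_inv, Equiv.Perm.mul_apply, hτ1, hτ2, hτ3,
        Equiv.swap_apply_left, Equiv.swap_apply_right, e20, e01, e12]
      ring
    · rcases eq_or_ne i x1 with h | hi1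
      · subst h
        simp only [hcinv, hc, mul_inv_rev, Equiv.swap_inv, Equiv.Perm.mul_apply, hτ1, hτ2, hτ3,
          Equiv.swap_apply_left, Equiv.swap_apply_right, e20, e01, e12]
        ring
      · rcases eq_or_ne i x2 with h | hi2
        · subst h
          simp only [hcinv, hc, mul_inv_rev, Equiv.swap_inv, Equiv.Perm.mul_apply, hτ1, hτ2, hτ3,
            Equiv.swap_apply_left, Equiv.swap_apply_right, e20, e01, e12]
          ring
        · simp only [hcinv, hc, mul_inv_rev, Equiv.swap_inv, Equiv.Perm.mul_apply, hτ1, hτ2, hτ3,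
            Equiv.swap_apply_of_ne_of_ne hi0 hi1,
            Equiv.swap_apply_of_ne_of_ne hi1 hi2,
            Equiv.swap_apply_of_ne_of_ne hi0 hi2]
  rw [hP1, hP2, hP3, hPc, hPc', hPid] at hmain
  norm_num at hmain
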